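/- Let G be a simple graph on a finite vertex type V, let C ⊆ V, and let k, t ∈ ℕ. Let m : V → ℕ be defined by m v = 1 if v ∈ C and m v = k + 1 if v ∉ C, and let G' = G⟨m⟩ be the fiber-clique blow-up. Then there exists a set B ⊆ C with |B| ≤ k such that every independent set of G of size at least t intersects B, if and only if there exists a set B' of vertices of G' with |B'| ≤ k such that every independent set of G' of size at least t intersects B'. -/

import Mathlib

/-- The fiber-clique blow-up `G⟨m⟩` of a simple graph `G` along `m : V → ℕ`: the vertex type is
`Σ v : V, Fin (m v)`, and two distinct vertices `⟨u, i⟩` and `⟨v, j⟩` are adjacent iff `u = v`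
or `u` and `v` are adjacent in `G`. -/
def SimpleGraph.fiberCliqueBlowup {V : Type*} (G : SimpleGraph V) (m : V → ℕ) :
    SimpleGraph (Σ v : V, Fin (m v)) where
  Adj a b := a ≠ b ∧ (a.1 = b.1 ∨ G.Adj a.1 b.1)
  symm := by
    constructor
    rintro a b ⟨hne, h⟩
    exact ⟨hne.symm, by cases h with
      | inl h => exact Or.inl h.symm
      | inr h => exact Or.inr (G.adj_symm h)⟩
  loopless := by constructor; rintro a ⟨hne, -⟩; exact hne rfl

/-- A set of vertices is an independent set if its elements are pairwise non-adjacent. -/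
def SimpleGraph.IsIndepSet' {V : Type*} (G : SimpleGraph V) (s : Set V) : Prop :=
  s.Pairwise fun a b => ¬ G.Adj a b

open Classical in
theorem indepSet_interdiction_fiberCliqueBlowup {V : Type*} [Fintype V] (G : SimpleGraph V)
    (C : Set V) (k t : ℕ) (m : V → ℕ) (hm : ∀ v : V, m v = if v ∈ C then 1 else k + 1) :
    (∃ B : Set V, B ⊆ C ∧ B.ncard ≤ k ∧
        ∀ S : Set V, G.IsIndepSet' S → t ≤ S.ncard → (S ∩ B).Nonempty) ↔
      (∃ B' : Set (Σ v : V, Fin (m v)), B'.ncard ≤ k ∧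
        ∀ S' : Set (Σ v : V, Fin (m v)),
          (G.fiberCliqueBlowup m).IsIndepSet' S' → t ≤ S'.ncard → (S' ∩ B').Nonempty) := by
  constructor
  · rintro ⟨B, hBC, hBk, hB⟩
    refine ⟨Sigma.fst ⁻¹' B, ?_, ?_⟩
    · -- fst is injective on the preimage since fibers over C have one element
      have hinj : Set.InjOn Sigma.fst (Sigma.fst ⁻¹' B : Set (Σ v : V, Fin (m v))) := by
        rintro ⟨u, i⟩ hu ⟨v, j⟩ hv (h : u = v)
        subst h
        have h1 : m u = 1 := by rw [hm u, if_pos (hBC hu)]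
        congr 1
        omega
      calc (Sigma.fst ⁻¹' B : Set (Σ v : V, Fin (m v))).ncard
          = (Sigma.fst '' (Sigma.fst ⁻¹' B) : Set V).ncard :=
            (Set.ncard_image_of_injOn hinj).symm
        _ ≤ B.ncard := Set.ncard_le_ncard (Set.image_preimage_subset _ _) B.toFinite
        _ ≤ k := hBk
    · intro S' hS' hts
      have hinjS : Set.InjOn Sigma.fst S' := by
        rintro a ha b hb h
        by_contra hne
        exact hS' ha hb hne ⟨hne, Or.inl h⟩
      have hindep : G.IsIndepSet' (Sigma.fst '' S') := by
        rintro u ⟨a, ha, rfl⟩ v ⟨b, hb, rfl⟩ hne hadj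
        have hab : a ≠ b := fun h => hne (by rw [h])
        exact hS' ha hb hab ⟨hab, Or.inr hadj⟩
      have hcard : t ≤ (Sigma.fst '' S').ncard := by
        rwa [Set.ncard_image_of_injOn hinjS]
      obtain ⟨v, hvS, hvB⟩ := hB _ hindep hcard
      obtain ⟨a, ha, rfl⟩ := hvS
      exact ⟨a, ha, hvB⟩
  · rintro ⟨B', hBk, hB⟩
    refine ⟨Sigma.fst '' B' ∩ C, Set.inter_subset_right, ?_, ?_⟩
    · calc (Sigma.fst '' B' ∩ C).ncard
          ≤ (Sigma.fst '' B').ncard :=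
            Set.ncard_le_ncard Set.inter_subset_left (Set.toFinite _)
        _ ≤ B'.ncard := Set.ncard_image_le B'.toFinite
        _ ≤ k := hBk
    · -- choose for each v an index avoiding B' when v ∉ C
      have hchoice : ∀ v : V, ∃ i : Fin (m v), v ∈ C ∨ (⟨v, i⟩ : Σ v : V, Fin (m v)) ∉ B' := by
        intro v
        by_cases hv : v ∈ C
        · have h1 : m v = 1 := by rw [hm v, if_pos hv]
          exact ⟨⟨0, by omega⟩, Or.inl hv⟩
        · by_contra hcon
          push_neg at hcon
          have hall : ∀ i : Fin (m v), (⟨v, i⟩ : Σ v : V, Fin (m v)) ∈ B' := by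
            intro i
            exact (hcon i).2
          have himg : (fun i : Fin (m v) => (⟨v, i⟩ : Σ v : V, Fin (m v))) ''
              Set.univ ⊆ B' := by
            rintro a ⟨i, -, rfl⟩; exact hall i
          have hinj : Function.Injective
              (fun i : Fin (m v) => (⟨v, i⟩ : Σ v : V, Fin (m v))) := by
            intro i j h
            simpa using h
          have h1 : ((fun i : Fin (m v) => (⟨v, i⟩ : Σ v : V, Fin (m v))) ''
              Set.univ).ncard = m v := by
            rw [Set.ncard_image_of_injective _ hinj, Set.ncard_univ,
              Nat.card_eq_fintype_card, Fintype.card_fin]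
          have h2 : m v ≤ k := by
            rw [← h1]
            exact le_trans (Set.ncard_le_ncard himg B'.toFinite) hBk
          rw [hm v, if_neg hv] at h2
          omega
      choose idx hidx using hchoice
      set f : V → Σ v : V, Fin (m v) := fun v => ⟨v, idx v⟩ with hf
      have hfinj : Function.Injective f := fun u v h => congrArg Sigma.fst h
      intro S hS hts
      have hindep : (G.fiberCliqueBlowup m).IsIndepSet' (f '' S) := by
        rintro a ⟨u, hu, rfl⟩ b ⟨v, hv, rfl⟩ hne hadj
        have huv : u ≠ v := fun h => hne (by rw [h])
        rcases hadj.2 with h | h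
        · exact huv h
        · exact hS hu hv huv h
      have hcard : t ≤ (f '' S).ncard := by
        rwa [Set.ncard_image_of_injective _ hfinj]
      obtain ⟨a, haS, haB⟩ := hB _ hindep hcard
      obtain ⟨v, hvS, rfl⟩ := haS
      rcases hidx v with hvC | hnB
      · exact ⟨v, hvS, ⟨f v, haB, rfl⟩, hvC⟩
      · exact absurd haB hnB
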